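/- Let Q = [−3,3] × [−3,3] ⊆ ℝ², and let Q = B ∪ W be a partition of Q into two disjoint sets. Suppose there are no points X, Y, Z ∈ Q, all in B or all in W, with dist(X,Y) = dist(Y,Z) = dist(Z,X) = 1. Then for every ε > 0 there exist points X, Y, Z ∈ B whose three pairwise distances all lie in the interval [1−ε, 1+ε], and likewise there exist points X', Y', Z' ∈ W whose three pairwise distances all lie in [1−ε, 1+ε]. -/

import Mathlib

open Real

/-- The closed square `[-3,3] × [-3,3]` in the Euclidean plane. -/
def Square3 : Set (EuclideanSpace ℝ (Fin 2)) :=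
  {p | p 0 ∈ Set.Icc (-3 : ℝ) 3 ∧ p 1 ∈ Set.Icc (-3 : ℝ) 3}

noncomputable def ept (θ : ℝ) : EuclideanSpace ℝ (Fin 2) := !₂[Real.cos θ, Real.sin θ]

lemma norm_ept (θ : ℝ) : ‖ept θ‖ = 1 := by
  rw [EuclideanSpace.norm_eq]
  rw [show ∑ i, ‖ept θ i‖^2 = |cos θ|^2 + |sin θ|^2 by
    simp [ept, Fin.sum_univ_two]]
  rw [sq_abs, sq_abs, add_comm, sin_sq_add_cos_sq]
  exact Real.sqrt_one

lemma dist_ept (θ φ : ℝ) : dist (ept θ) (ept φ) = 2 * |Real.sin ((θ - φ)/2)| := by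
  rw [EuclideanSpace.dist_eq]
  rw [show ∑ i, (dist (ept θ i) (ept φ i))^2
      = (cos θ - cos φ)^2 + (sin θ - sin φ)^2 by
    simp [ept, Fin.sum_univ_two, Real.dist_eq, sq_abs]]
  have h1 : (cos θ - cos φ)^2 + (sin θ - sin φ)^2 = 2 - 2 * cos (θ - φ) := by
    have := Real.cos_sub θ φ
    nlinarith [sin_sq_add_cos_sq θ, sin_sq_add_cos_sq φ]
  rw [h1, Real.abs_sin_half]
  rw [show (2:ℝ) - 2*cos (θ - φ) = 2^2 * ((1 - cos (θ-φ))/2) by ring]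
  rw [Real.sqrt_mul (by norm_num), Real.sqrt_sq (by norm_num)]

lemma sin_lip (x y : ℝ) : |Real.sin x - Real.sin y| ≤ |x - y| := by
  rw [Real.sin_sub_sin, abs_mul, abs_mul]
  have h1 := Real.abs_sin_le_abs (x := (x-y)/2)
  have h2 := Real.abs_cos_le_one ((x+y)/2)
  have h3 : |(x-y)/2| = |x-y|/2 := by rw [abs_div]; norm_num
  have h4 : |(2:ℝ)| = 2 := by norm_num
  rw [h4]
  nlinarith [abs_nonneg (Real.sin ((x-y)/2)), abs_nonneg (x-y)]

lemma mem_sq_of_norm (p : EuclideanSpace ℝ (Fin 2)) (h : ‖p‖ ≤ 3) : p ∈ Square3 := by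
  have hsq : ‖p‖^2 = p 0 ^ 2 + p 1 ^ 2 := by
    rw [EuclideanSpace.norm_eq, Real.sq_sqrt (by positivity)]
    simp [Fin.sum_univ_two, sq_abs]
  have h0 : ‖p‖ ^ 2 ≤ 9 := by nlinarith [norm_nonneg p]
  constructor
  · constructor <;> nlinarith
  · constructor <;> nlinarith

section Main

variable (B W : Set (EuclideanSpace ℝ (Fin 2)))

/-- near-unit B-pair on the unit circle around a central W point -/
lemma pair_near
    (hunion : B ∪ W = Square3)
    (hno : ¬∃ X Y Z : EuclideanSpace ℝ (Fin 2),
      ((X ∈ B ∧ Y ∈ B ∧ Z ∈ B) ∨ (X ∈ W ∧ Y ∈ W ∧ Z ∈ W)) ∧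
      dist X Y = 1 ∧ dist Y Z = 1 ∧ dist Z X = 1)
    (ε : ℝ) (hε : 0 < ε) (hε1 : ε ≤ 1)
    (R : EuclideanSpace ℝ (Fin 2)) (hR : R ∈ W) (hRn : ‖R‖ ≤ 2) :
    ∃ Y Y', Y ∈ B ∧ Y' ∈ B ∧ dist R Y = 1 ∧ dist R Y' = 1 ∧
      dist Y Y' ∈ Set.Icc (1-ε) (1+ε) := by
  have hQ : ∀ p : EuclideanSpace ℝ (Fin 2), ‖p‖ ≤ 3 → p ∈ B ∨ p ∈ W := by
    intro p hp
    have : p ∈ Square3 := mem_sq_of_norm p hp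
    rw [← hunion] at this; exact this
  set A : ℝ → EuclideanSpace ℝ (Fin 2) := fun θ => R + ept θ with hA
  have hAn : ∀ θ, ‖A θ‖ ≤ 3 := by
    intro θ
    calc ‖R + ept θ‖ ≤ ‖R‖ + ‖ept θ‖ := norm_add_le _ _
    _ ≤ 3 := by rw [norm_ept]; linarith
  have hdRA : ∀ θ, dist R (A θ) = 1 := by
    intro θ
    rw [dist_comm, hA]
    simp only
    rw [dist_eq_norm, add_sub_cancel_left, norm_ept]
  have hdAA : ∀ θ φ, dist (A θ) (A φ) = 2 * |sin ((θ - φ)/2)| := by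
    intro θ φ
    rw [hA]
    simp only
    rw [dist_add_left, dist_ept]
  have h1 : ∀ θ, A θ ∈ B ∨ A (θ + π/3) ∈ B := by
    intro θ
    rcases hQ _ (hAn θ) with h | h
    · exact Or.inl h
    rcases hQ _ (hAn (θ + π/3)) with h' | h'
    · exact Or.inr h'
    exfalso
    apply hno
    refine ⟨R, A θ, A (θ + π/3), Or.inr ⟨hR, h, h'⟩, hdRA θ, ?_, by rw [dist_comm]; exact hdRA _⟩
    rw [hdAA, show (θ - (θ + π/3))/2 = -(π/6) by ring, Real.sin_neg, abs_neg,
      Real.sin_pi_div_six, show |(1:ℝ)/2| = 1/2 from abs_of_pos (by norm_num)]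
    norm_num
  by_contra hnp
  push_neg at hnp
  have h3 : ∀ θ, A θ ∈ B → ∀ t, 0 ≤ t → t ≤ ε → A (θ + t) ∈ B := by
    intro θ hθ t ht0 htε
    rcases h1 (θ + t) with h | h
    · exact h
    exfalso
    have hB' : A (θ + t + π/3) ∈ B := h
    refine hnp (A θ) (A (θ + t + π/3)) hθ hB' (hdRA _) (hdRA _) ?_
    rw [hdAA, show (θ - (θ + t + π/3))/2 = -((π/3 + t)/2) by ring, Real.sin_neg, abs_neg]
    have hpos : 0 < Real.sin ((π/3 + t)/2) := by
      apply Real.sin_pos_of_pos_of_lt_pi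
      · have := Real.pi_pos; linarith
      · have := Real.pi_gt_three; linarith
    rw [abs_of_pos hpos]
    have hl := sin_lip ((π/3 + t)/2) (π/6)
    rw [show ((π/3 + t)/2 - π/6) = t/2 by ring, Real.sin_pi_div_six,
      abs_of_nonneg (by linarith : (0:ℝ) ≤ t/2)] at hl
    rcases abs_le.mp hl with ⟨hlo, hhi⟩
    constructor <;> [linarith; linarith]
  obtain ⟨θ₀, hθ₀⟩ : ∃ θ, A θ ∈ B := by
    rcases h1 0 with h | h
    exacts [⟨0, h⟩, ⟨0 + π/3, h⟩]
  have h4 : ∀ k : ℕ, ∀ t, 0 ≤ t → t ≤ k * ε → A (θ₀ + t) ∈ B := by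
    intro k
    induction k with
    | zero =>
      intro t ht0 ht1
      have h00 : t = 0 := le_antisymm (by simpa using ht1) ht0
      rw [h00, add_zero]; exact hθ₀
    | succ k ih =>
      intro t ht0 ht1
      by_cases hc : t ≤ k * ε
      · exact ih t ht0 hc
      push_neg at hc
      have hk : A (θ₀ + k * ε) ∈ B := ih (k * ε) (by positivity) le_rfl
      have hstep := h3 _ hk (t - k * ε) (by linarith) (by push_cast at ht1 ⊢; linarith)
      rw [show θ₀ + ↑k * ε + (t - ↑k * ε) = θ₀ + t by ring] at hstep
      exact hstep
  obtain ⟨n, hn⟩ := exists_nat_ge (π/3 / ε)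
  have hπ : π/3 ≤ n * ε := by
    rw [div_le_iff₀ hε] at hn; linarith
  have hB2 : A (θ₀ + π/3) ∈ B := h4 n (π/3) (by positivity) hπ
  refine hnp (A θ₀) (A (θ₀ + π/3)) hθ₀ hB2 (hdRA _) (hdRA _) ?_
  rw [hdAA, show (θ₀ - (θ₀ + π/3))/2 = -(π/6) by ring, Real.sin_neg, abs_neg,
    Real.sin_pi_div_six]
  rw [show |(1:ℝ)/2| = 1/2 from abs_of_pos (by norm_num)]
  constructor <;> linarith

/-- any point within ε of a central W point is W -/
lemma ball_W
    (hunion : B ∪ W = Square3)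
    (hno : ¬∃ X Y Z : EuclideanSpace ℝ (Fin 2),
      ((X ∈ B ∧ Y ∈ B ∧ Z ∈ B) ∨ (X ∈ W ∧ Y ∈ W ∧ Z ∈ W)) ∧
      dist X Y = 1 ∧ dist Y Z = 1 ∧ dist Z X = 1)
    (ε : ℝ) (hε : 0 < ε) (hε1 : ε ≤ 1)
    (H2 : ¬∃ X Y Z : EuclideanSpace ℝ (Fin 2), X ∈ B ∧ Y ∈ B ∧ Z ∈ B ∧
        dist X Y ∈ Set.Icc (1 - ε) (1 + ε) ∧ dist Y Z ∈ Set.Icc (1 - ε) (1 + ε) ∧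
        dist Z X ∈ Set.Icc (1 - ε) (1 + ε))
    (R : EuclideanSpace ℝ (Fin 2)) (hR : R ∈ W) (hRn : ‖R‖ ≤ 2)
    (X : EuclideanSpace ℝ (Fin 2)) (hX : dist X R ≤ ε) : X ∈ W := by
  obtain ⟨Y, Y', hY, hY', hRY, hRY', hYY'⟩ := pair_near B W hunion hno ε hε hε1 R hR hRn
  have hXn : ‖X‖ ≤ 3 := by
    have h1 : ‖X‖ ≤ ‖X - R‖ + ‖R‖ := by
      calc ‖X‖ = ‖X - R + R‖ := by rw [sub_add_cancel]
      _ ≤ ‖X - R‖ + ‖R‖ := norm_add_le _ _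
    rw [← dist_eq_norm] at h1
    linarith
  have : X ∈ Square3 := mem_sq_of_norm X hXn
  rw [← hunion] at this
  rcases this with hB | hW
  · exfalso
    apply H2
    have t1 := abs_dist_sub_le X R Y
    have t2 := abs_dist_sub_le X R Y'
    rw [hRY] at t1
    rw [hRY'] at t2
    rcases abs_le.mp t1 with ⟨t1a, t1b⟩
    rcases abs_le.mp t2 with ⟨t2a, t2b⟩
    refine ⟨X, Y, Y', hB, hY, hY', ⟨by linarith, by linarith⟩, hYY', ?_⟩
    rw [dist_comm]
    exact ⟨by linarith, by linarith⟩
  · exact hW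

lemma almost_in_B
    (hunion : B ∪ W = Square3)
    (hno : ¬∃ X Y Z : EuclideanSpace ℝ (Fin 2),
      ((X ∈ B ∧ Y ∈ B ∧ Z ∈ B) ∨ (X ∈ W ∧ Y ∈ W ∧ Z ∈ W)) ∧
      dist X Y = 1 ∧ dist Y Z = 1 ∧ dist Z X = 1)
    (ε : ℝ) (hε : 0 < ε) (hε1 : ε ≤ 1) :
    ∃ X Y Z : EuclideanSpace ℝ (Fin 2), X ∈ B ∧ Y ∈ B ∧ Z ∈ B ∧
        dist X Y ∈ Set.Icc (1 - ε) (1 + ε) ∧ dist Y Z ∈ Set.Icc (1 - ε) (1 + ε) ∧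
        dist Z X ∈ Set.Icc (1 - ε) (1 + ε) := by
  by_contra H2
  have hQ : ∀ p : EuclideanSpace ℝ (Fin 2), ‖p‖ ≤ 3 → p ∈ B ∨ p ∈ W := by
    intro p hp
    have : p ∈ Square3 := mem_sq_of_norm p hp
    rw [← hunion] at this; exact this
  have hone : (1:ℝ) ∈ Set.Icc (1-ε) (1+ε) := ⟨by linarith, by linarith⟩
  -- initial unit triangle
  set P0 : EuclideanSpace ℝ (Fin 2) := 0 with hP0
  set P1 : EuclideanSpace ℝ (Fin 2) := ept 0 with hP1
  set P2 : EuclideanSpace ℝ (Fin 2) := ept (π/3) with hP2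
  have d01 : dist P0 P1 = 1 := by rw [hP0, hP1, dist_zero_left, norm_ept]
  have d12 : dist P1 P2 = 1 := by
    rw [hP1, hP2, dist_ept, show ((0:ℝ) - π/3)/2 = -(π/6) by ring, Real.sin_neg, abs_neg,
      Real.sin_pi_div_six, show |(1:ℝ)/2| = 1/2 from abs_of_pos (by norm_num)]
    norm_num
  have d20 : dist P2 P0 = 1 := by rw [hP0, hP2, dist_zero_right, norm_ept]
  have n0 : ‖P0‖ ≤ 1 := by rw [hP0, norm_zero]; norm_num
  have n1 : ‖P1‖ ≤ 1 := le_of_eq (norm_ept 0)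
  have n2 : ‖P2‖ ≤ 1 := le_of_eq (norm_ept (π/3))
  -- find a W vertex
  obtain ⟨R₀, hR₀, hR₀n⟩ : ∃ R, R ∈ W ∧ ‖R‖ ≤ 1 := by
    rcases hQ P0 (by linarith) with h0 | h0
    · rcases hQ P1 (by linarith) with hb1 | hw1
      · rcases hQ P2 (by linarith) with hb2 | hw2
        · exact absurd ⟨P0, P1, P2, h0, hb1, hb2, by rw [d01]; exact hone,
            by rw [d12]; exact hone, by rw [d20]; exact hone⟩ H2
        · exact ⟨P2, hw2, n2⟩
      · exact ⟨P1, hw1, n1⟩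
    · exact ⟨P0, h0, n0⟩
  -- grow a W ball of radius 1 around R₀
  have grow : ∀ k : ℕ, ∀ X, dist X R₀ ≤ 1 → dist X R₀ ≤ k * ε → X ∈ W := by
    intro k
    induction k with
    | zero =>
      intro X _ h0
      have hd0 : dist X R₀ = 0 := le_antisymm (by simpa using h0) dist_nonneg
      rw [dist_eq_zero.mp hd0]; exact hR₀
    | succ k ih =>
      intro X h1 hk1
      by_cases hc : dist X R₀ ≤ k * ε
      · exact ih X h1 hc
      push_neg at hc
      by_cases hd : dist X R₀ ≤ ε
      · exact ball_W B W hunion hno ε hε hε1 H2 R₀ hR₀ (by linarith) X hd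
      push_neg at hd
      have hdpos : (0:ℝ) < dist X R₀ := lt_trans hε hd
      set d := dist X R₀ with hdd
      set c := (d - ε)/d with hcc
      have hc0 : 0 ≤ c := by
        apply div_nonneg <;> linarith
      set X' := R₀ + c • (X - R₀) with hX'
      have hdX'R : dist X' R₀ = d - ε := by
        rw [hX', dist_eq_norm, add_sub_cancel_left, norm_smul, Real.norm_eq_abs,
          abs_of_nonneg hc0, show ‖X - R₀‖ = d by rw [← dist_eq_norm], hcc]
        field_simp
      have hkε : d ≤ (k+1) * ε := by push_cast at hk1; linarith
      have hX'W : X' ∈ W := ih X' (by rw [hdX'R]; linarith) (by rw [hdX'R]; linarith)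
      have hX'n : ‖X'‖ ≤ 2 := by
        have h1' : ‖X'‖ ≤ ‖X' - R₀‖ + ‖R₀‖ := by
          calc ‖X'‖ = ‖X' - R₀ + R₀‖ := by rw [sub_add_cancel]
          _ ≤ ‖X' - R₀‖ + ‖R₀‖ := norm_add_le _ _
        rw [← dist_eq_norm, hdX'R] at h1'
        linarith
      have hXX' : dist X X' ≤ ε := by
        rw [dist_eq_norm, hX']
        have hrw : X - (R₀ + c • (X - R₀)) = (1 - c) • (X - R₀) := by
          rw [sub_smul, one_smul]
          abel
        rw [hrw, norm_smul, Real.norm_eq_abs,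
          show ‖X - R₀‖ = d by rw [← dist_eq_norm]]
        have h1c : 1 - c = ε/d := by
          rw [hcc]; field_simp; ring
        rw [h1c, abs_of_nonneg (by positivity), div_mul_cancel₀ _ (ne_of_gt hdpos)]
      exact ball_W B W hunion hno ε hε hε1 H2 X' hX'W hX'n X hXX'
  obtain ⟨n, hn⟩ := exists_nat_ge (1/ε)
  have hball : ∀ X, dist X R₀ ≤ 1 → X ∈ W := by
    intro X h
    refine grow n X h (le_trans h ?_)
    rw [div_le_iff₀ hε] at hn
    linarith
  -- exact unit triangle inside the W ball
  set s : ℝ := Real.sqrt 3 / 3 with hs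
  have hs0 : 0 ≤ s := by positivity
  have hsq3 : Real.sqrt 3 * Real.sqrt 3 = 3 := Real.mul_self_sqrt (by norm_num)
  have hs3 : Real.sqrt 3 ≤ 3 := by nlinarith [Real.sqrt_nonneg 3]
  have hs1 : s ≤ 1 := by rw [hs]; linarith
  set T : ℝ → EuclideanSpace ℝ (Fin 2) := fun α => R₀ + s • ept α with hT
  have hdT : ∀ α β, dist (T α) (T β) = s * (2 * |sin ((α - β)/2)|) := by
    intro α β
    rw [hT]
    simp only
    rw [dist_add_left, dist_smul₀, dist_ept, Real.norm_eq_abs, abs_of_nonneg hs0]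
  have hsT : ∀ α, dist (T α) R₀ ≤ 1 := by
    intro α
    rw [hT]
    simp only
    rw [dist_eq_norm, add_sub_cancel_left, norm_smul, Real.norm_eq_abs,
      abs_of_nonneg hs0, norm_ept, mul_one]
    exact hs1
  have hTW : ∀ α, T α ∈ W := fun α => hball _ (hsT α)
  have hsin23 : Real.sin (2*π/3) = Real.sqrt 3 / 2 := by
    rw [show 2*π/3 = π - π/3 by ring, Real.sin_pi_sub, Real.sin_pi_div_three]
  have habs : |Real.sqrt 3 / 2| = Real.sqrt 3 / 2 := abs_of_nonneg (by positivity)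
  apply hno
  refine ⟨T 0, T (2*π/3), T (4*π/3), Or.inr ⟨hTW _, hTW _, hTW _⟩, ?_, ?_, ?_⟩
  · rw [hdT, show ((0:ℝ) - 2*π/3)/2 = -(π/3) by ring, Real.sin_neg, abs_neg,
      Real.sin_pi_div_three, habs, hs]
    field_simp
    rw [Real.sq_sqrt (by norm_num)]
  · rw [hdT, show ((2*π/3:ℝ) - 4*π/3)/2 = -(π/3) by ring, Real.sin_neg, abs_neg,
      Real.sin_pi_div_three, habs, hs]
    field_simp
    rw [Real.sq_sqrt (by norm_num)]
  · rw [hdT, show ((4*π/3:ℝ) - 0)/2 = 2*π/3 by ring, hsin23, habs, hs]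
    field_simp
    rw [Real.sq_sqrt (by norm_num)]

end Main

theorem stmt6 (B W : Set (EuclideanSpace ℝ (Fin 2)))
    (hunion : B ∪ W = Square3) (hdisj : B ∩ W = ∅)
    (hno : ¬∃ X Y Z : EuclideanSpace ℝ (Fin 2),
      ((X ∈ B ∧ Y ∈ B ∧ Z ∈ B) ∨ (X ∈ W ∧ Y ∈ W ∧ Z ∈ W)) ∧
      dist X Y = 1 ∧ dist Y Z = 1 ∧ dist Z X = 1) :
    ∀ ε : ℝ, 0 < ε →
      (∃ X Y Z : EuclideanSpace ℝ (Fin 2), X ∈ B ∧ Y ∈ B ∧ Z ∈ B ∧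
        dist X Y ∈ Set.Icc (1 - ε) (1 + ε) ∧ dist Y Z ∈ Set.Icc (1 - ε) (1 + ε) ∧
        dist Z X ∈ Set.Icc (1 - ε) (1 + ε)) ∧
      (∃ X Y Z : EuclideanSpace ℝ (Fin 2), X ∈ W ∧ Y ∈ W ∧ Z ∈ W ∧
        dist X Y ∈ Set.Icc (1 - ε) (1 + ε) ∧ dist Y Z ∈ Set.Icc (1 - ε) (1 + ε) ∧
        dist Z X ∈ Set.Icc (1 - ε) (1 + ε)) := by
  intro ε hε
  set δ := min ε 1 with hδdef
  have hδ : 0 < δ := lt_min hε one_pos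
  have hδ1 : δ ≤ 1 := min_le_right _ _
  have hδε : δ ≤ ε := min_le_left _ _
  have hsub : Set.Icc (1-δ) (1+δ) ⊆ Set.Icc (1-ε) (1+ε) :=
    Set.Icc_subset_Icc (by linarith) (by linarith)
  constructor
  · obtain ⟨X, Y, Z, h1, h2, h3, d1, d2, d3⟩ := almost_in_B B W hunion hno δ hδ hδ1
    exact ⟨X, Y, Z, h1, h2, h3, hsub d1, hsub d2, hsub d3⟩
  · have hunion' : W ∪ B = Square3 := by rw [Set.union_comm]; exact hunion
    have hno' : ¬∃ X Y Z : EuclideanSpace ℝ (Fin 2),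
        ((X ∈ W ∧ Y ∈ W ∧ Z ∈ W) ∨ (X ∈ B ∧ Y ∈ B ∧ Z ∈ B)) ∧
        dist X Y = 1 ∧ dist Y Z = 1 ∧ dist Z X = 1 := by
      rintro ⟨X, Y, Z, h, hd⟩
      exact hno ⟨X, Y, Z, h.symm, hd⟩
    obtain ⟨X, Y, Z, h1, h2, h3, d1, d2, d3⟩ := almost_in_B W B hunion' hno' δ hδ hδ1
    exact ⟨X, Y, Z, h1, h2, h3, hsub d1, hsub d2, hsub d3⟩
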